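/- Let d ≥ 1 and 0 < σ < d/2. With G_t the Hermite heat kernel on ℝ^d and K^σ(x,y) = Γ(σ)^{-1} ∫_0^∞ G_t(x,y) t^{σ-1} dt, there is a constant C such that K^σ(x,y) ≤ C ‖x−y‖^{2σ−d} for all x ≠ y with ‖x−y‖ < 1. -/

import Mathlib

open MeasureTheory Real

/-- The Hermite heat kernel on ℝ^d. -/
noncomputable def hermiteHeatKernel (d : ℕ) (t : ℝ) (x y : EuclideanSpace ℝ (Fin d)) : ℝ :=
  (2 * Real.pi * Real.sinh (2 * t)) ^ (-(d : ℝ) / 2) *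
    Real.exp (-(1 / 4) * (Real.tanh t * ‖x + y‖ ^ 2 +
      (Real.cosh t / Real.sinh t) * ‖x - y‖ ^ 2))

lemma aux_sinh_le_mul_cosh {t : ℝ} (ht : 0 ≤ t) : Real.sinh t ≤ t * Real.cosh t := by
  have key : ∀ x : ℝ, HasDerivAt (fun s => s * Real.cosh s - Real.sinh s) (x * Real.sinh x) x := by
    intro x
    have h1 : HasDerivAt (fun s : ℝ => s * Real.cosh s)
        (1 * Real.cosh x + x * Real.sinh x) x :=
      (hasDerivAt_id x).mul (Real.hasDerivAt_cosh x)
    have h2 := h1.sub (Real.hasDerivAt_sinh x)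
    rw [show x * Real.sinh x = 1 * Real.cosh x + x * Real.sinh x - Real.cosh x by ring]
    exact h2
  have mono : MonotoneOn (fun s : ℝ => s * Real.cosh s - Real.sinh s) (Set.Ici 0) := by
    refine monotoneOn_of_deriv_nonneg (convex_Ici 0) (Continuous.continuousOn (by continuity))
      (fun x _ => (key x).differentiableAt.differentiableWithinAt) ?_
    intro x hx
    rw [(key x).deriv]
    rw [interior_Ici] at hx
    exact mul_nonneg (le_of_lt hx) (Real.sinh_nonneg_iff.mpr (le_of_lt hx))
  have h0 := mono Set.self_mem_Ici (Set.mem_Ici.mpr ht) ht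
  simp only [zero_mul, Real.sinh_zero, sub_zero, zero_sub, neg_zero] at h0
  linarith

lemma aux_contOn_H (d : ℕ) (σ : ℝ) :
    ContinuousOn (fun s : ℝ => s ^ (σ - 1 - (d : ℝ) / 2) * Real.exp (-(4 * s)⁻¹))
      (Set.Ioi 0) := by
  apply ContinuousOn.mul
  · exact fun s hs => (Real.continuousAt_rpow_const s _ (Or.inl (ne_of_gt hs))).continuousWithinAt
  · refine Real.continuous_exp.comp_continuousOn ?_
    refine ContinuousOn.neg (ContinuousOn.inv₀ (by fun_prop) fun s hs => ?_)
    have : (0:ℝ) < s := hs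
    positivity

lemma aux_integrableOn_H (d : ℕ) (σ : ℝ) (hσ : 0 < σ) (hσ' : σ < (d : ℝ) / 2) :
    IntegrableOn (fun s : ℝ => s ^ (σ - 1 - (d : ℝ) / 2) * Real.exp (-(4 * s)⁻¹))
      (Set.Ioi 0) := by
  have hd0 : (0:ℝ) ≤ (d : ℝ) := Nat.cast_nonneg d
  have hsplit : Set.Ioc (0:ℝ) 1 ∪ Set.Ioi 1 = Set.Ioi 0 := Set.Ioc_union_Ioi_eq_Ioi zero_le_one
  rw [← hsplit]
  apply MeasureTheory.IntegrableOn.union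
  · -- on (0, 1]
    have hmaj : IntegrableOn
        (fun s : ℝ => (d.factorial * 4 ^ d : ℝ) * s ^ (σ - 1 + (d : ℝ) / 2))
        (Set.Ioc (0:ℝ) 1) := by
      have h1 : IntervalIntegrable (fun s : ℝ => s ^ (σ - 1 + (d : ℝ) / 2)) volume 0 1 :=
        intervalIntegral.intervalIntegrable_rpow' (by linarith)
      have h2 := (intervalIntegrable_iff_integrableOn_Ioc_of_le zero_le_one).mp h1
      exact h2.const_mul _
    refine hmaj.integrable.mono'
      (((aux_contOn_H d σ).mono (Set.Ioc_subset_Ioi_self)).aestronglyMeasurable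
        measurableSet_Ioc) ?_
    rw [ae_restrict_iff' measurableSet_Ioc]
    refine Filter.Eventually.of_forall fun s hs => ?_
    have hs0 : 0 < s := hs.1
    have hx0 : (0:ℝ) < (4 * s)⁻¹ := by positivity
    have hexp : Real.exp (-(4 * s)⁻¹) ≤ (d.factorial : ℝ) * (4 * s) ^ d := by
      rw [Real.exp_neg]
      have hpde : ((4 * s)⁻¹) ^ d / (d.factorial : ℝ) ≤ Real.exp ((4 * s)⁻¹) :=
        Real.pow_div_factorial_le_exp _ (le_of_lt hx0) d
      have hpos : (0:ℝ) < ((4 * s)⁻¹) ^ d / (d.factorial : ℝ) := by positivity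
      calc (Real.exp ((4 * s)⁻¹))⁻¹ ≤ (((4 * s)⁻¹) ^ d / (d.factorial : ℝ))⁻¹ :=
            inv_anti₀ hpos hpde
        _ = (d.factorial : ℝ) * (4 * s) ^ d := by
            rw [inv_pow]
            field_simp
    rw [Real.norm_eq_abs,
      abs_of_nonneg (mul_nonneg (Real.rpow_nonneg hs0.le _) (Real.exp_pos _).le)]
    have key : s ^ (σ - 1 - (d : ℝ) / 2) * ((d.factorial : ℝ) * (4 * s) ^ d)
        = (d.factorial * 4 ^ d : ℝ) * s ^ (σ - 1 + (d : ℝ) / 2) := by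
      rw [mul_pow, ← Real.rpow_natCast s d,
        show σ - 1 + (d : ℝ) / 2 = σ - 1 - (d : ℝ) / 2 + (d : ℝ) by ring,
        Real.rpow_add hs0]
      ring
    calc s ^ (σ - 1 - (d : ℝ) / 2) * Real.exp (-(4 * s)⁻¹)
        ≤ s ^ (σ - 1 - (d : ℝ) / 2) * ((d.factorial : ℝ) * (4 * s) ^ d) :=
          mul_le_mul_of_nonneg_left hexp (Real.rpow_nonneg hs0.le _)
      _ = (d.factorial * 4 ^ d : ℝ) * s ^ (σ - 1 + (d : ℝ) / 2) := key
  · -- on (1, ∞)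
    have hmaj : IntegrableOn (fun s : ℝ => s ^ (σ - 1 - (d : ℝ) / 2)) (Set.Ioi (1:ℝ)) :=
      integrableOn_Ioi_rpow_of_lt (by linarith) zero_lt_one
    refine hmaj.integrable.mono'
      (((aux_contOn_H d σ).mono (Set.Ioi_subset_Ioi zero_le_one)).aestronglyMeasurable
        measurableSet_Ioi) ?_
    rw [ae_restrict_iff' measurableSet_Ioi]
    refine Filter.Eventually.of_forall fun s hs => ?_
    have hs0 : (0:ℝ) < s := lt_trans zero_lt_one hs
    have h1 : Real.exp (-(4 * s)⁻¹) ≤ 1 :=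
      Real.exp_le_one_iff.mpr (neg_nonpos.mpr (by positivity))
    rw [Real.norm_eq_abs,
      abs_of_nonneg (mul_nonneg (Real.rpow_nonneg hs0.le _) (Real.exp_pos _).le)]
    calc s ^ (σ - 1 - (d : ℝ) / 2) * Real.exp (-(4 * s)⁻¹)
        ≤ s ^ (σ - 1 - (d : ℝ) / 2) * 1 :=
          mul_le_mul_of_nonneg_left h1 (Real.rpow_nonneg hs0.le _)
      _ = s ^ (σ - 1 - (d : ℝ) / 2) := mul_one _

theorem stmt_6 (d : ℕ) (hd : 1 ≤ d) (σ : ℝ) (hσ : 0 < σ) (hσ' : σ < (d : ℝ) / 2) :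
    ∃ C > 0, ∀ x y : EuclideanSpace ℝ (Fin d), x ≠ y → ‖x - y‖ < 1 →
      (Real.Gamma σ)⁻¹ *
        (∫ t in Set.Ioi (0:ℝ), hermiteHeatKernel d t x y * t ^ (σ - 1)) ≤
      C * ‖x - y‖ ^ (2 * σ - d) := by
  have hΓ : 0 < Real.Gamma σ := Real.Gamma_pos_of_pos hσ
  have hd0 : (0:ℝ) ≤ (d : ℝ) := Nat.cast_nonneg d
  set H : ℝ → ℝ := fun s => s ^ (σ - 1 - (d : ℝ) / 2) * Real.exp (-(4 * s)⁻¹) with hHdef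
  have hHint : IntegrableOn H (Set.Ioi 0) := aux_integrableOn_H d σ hσ hσ'
  set I : ℝ := ∫ s in Set.Ioi (0:ℝ), H s with hIdef
  have hI0 : 0 ≤ I := setIntegral_nonneg measurableSet_Ioi fun s hs =>
    mul_nonneg (Real.rpow_nonneg (le_of_lt hs) _) (Real.exp_pos _).le
  set c : ℝ := (4 * Real.pi) ^ (-(d : ℝ) / 2) with hcdef
  have hc0 : 0 < c := Real.rpow_pos_of_pos (by positivity) _
  refine ⟨(Real.Gamma σ)⁻¹ * c * I + 1, by positivity, ?_⟩
  intro x y hxy hr1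
  set r : ℝ := ‖x - y‖ with hrdef
  have hr0 : 0 < r := by
    rw [hrdef, norm_pos_iff]
    exact sub_ne_zero_of_ne hxy
  have hrpos : 0 < r ^ (2 * σ - (d:ℝ)) := Real.rpow_pos_of_pos hr0 _
  have hr2 : (0:ℝ) < (r ^ 2)⁻¹ := by positivity
  -- integrability of the majorant
  have hgint : Integrable (fun t => (c * r ^ (2 * σ - 2 - (d:ℝ))) * H ((r ^ 2)⁻¹ * t))
      (volume.restrict (Set.Ioi 0)) := by
    have h1 : IntegrableOn (fun t => H ((r ^ 2)⁻¹ * t)) (Set.Ioi 0) :=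
      (integrableOn_Ioi_comp_mul_left_iff H 0 hr2).mpr (by rw [mul_zero]; exact hHint)
    exact h1.const_mul _
  -- nonnegativity of the integrand
  have hnn : 0 ≤ᵐ[volume.restrict (Set.Ioi 0)]
      fun t => hermiteHeatKernel d t x y * t ^ (σ - 1) := by
    filter_upwards [ae_restrict_mem measurableSet_Ioi] with t ht
    have ht0 : (0:ℝ) < t := ht
    have hsinh2 : 0 < Real.sinh (2 * t) := Real.sinh_pos_iff.mpr (by linarith)
    simp only [Pi.zero_apply]
    unfold hermiteHeatKernel
    have h1 : (0:ℝ) < 2 * Real.pi * Real.sinh (2 * t) := by positivity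
    positivity
  -- pointwise bound
  have hle : (fun t => hermiteHeatKernel d t x y * t ^ (σ - 1)) ≤ᵐ[volume.restrict (Set.Ioi 0)]
      fun t => (c * r ^ (2 * σ - 2 - (d:ℝ))) * H ((r ^ 2)⁻¹ * t) := by
    filter_upwards [ae_restrict_mem measurableSet_Ioi] with t ht
    have ht0 : (0:ℝ) < t := ht
    have hsinh2 : 0 < Real.sinh (2 * t) := Real.sinh_pos_iff.mpr (by linarith)
    have hsinht : 0 < Real.sinh t := Real.sinh_pos_iff.mpr ht0
    have hcosht : 0 < Real.cosh t := Real.cosh_pos t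
    have hed : -(d:ℝ) / 2 ≤ 0 := by linarith
    -- step A : bound on the power factor
    have hA : (2 * Real.pi * Real.sinh (2 * t)) ^ (-(d : ℝ) / 2)
        ≤ c * t ^ (-(d : ℝ) / 2) := by
      have h1 : 2 * Real.pi * (2 * t) ≤ 2 * Real.pi * Real.sinh (2 * t) :=
        mul_le_mul_of_nonneg_left (Real.self_lt_sinh_iff.mpr (by linarith)).le (by positivity)
      have h2 := Real.rpow_le_rpow_of_nonpos (show (0:ℝ) < 2 * Real.pi * (2 * t) by positivity)
        h1 hed
      have h3 : (2 * Real.pi * (2 * t)) = 4 * Real.pi * t := by ring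
      rw [h3, Real.mul_rpow (by positivity) ht0.le] at h2
      exact h2
    -- step B : bound on the exponential factor
    have hB : Real.exp (-(1 / 4) * (Real.tanh t * ‖x + y‖ ^ 2 +
          (Real.cosh t / Real.sinh t) * r ^ 2))
        ≤ Real.exp (-(4 * ((r ^ 2)⁻¹ * t))⁻¹) := by
      apply Real.exp_le_exp.mpr
      have harg : (4 * ((r ^ 2)⁻¹ * t))⁻¹ = r ^ 2 / (4 * t) := by
        field_simp
      rw [harg]
      have h1 : 0 ≤ Real.tanh t * ‖x + y‖ ^ 2 := by
        apply mul_nonneg _ (sq_nonneg _)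
        rw [Real.tanh_eq_sinh_div_cosh]
        exact div_nonneg hsinht.le hcosht.le
      have h2 : r ^ 2 / t ≤ Real.cosh t / Real.sinh t * r ^ 2 := by
        have hcoth : 1 / t ≤ Real.cosh t / Real.sinh t := by
          rw [div_le_div_iff₀ ht0 hsinht]
          have := aux_sinh_le_mul_cosh ht0.le
          linarith
        calc r ^ 2 / t = 1 / t * r ^ 2 := by ring
          _ ≤ Real.cosh t / Real.sinh t * r ^ 2 :=
            mul_le_mul_of_nonneg_right hcoth (sq_nonneg r)
      have h3 : r ^ 2 / (4 * t) = (1 / 4) * (r ^ 2 / t) := by ring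
      rw [h3]
      nlinarith [h1, h2]
    -- rewrite the majorant
    have hcomb : ((r ^ 2)⁻¹) ^ (σ - 1 - (d:ℝ) / 2) * r ^ (2 * σ - 2 - (d:ℝ)) = 1 := by
      rw [← Real.rpow_natCast r 2, ← Real.rpow_neg hr0.le, ← Real.rpow_mul hr0.le,
        ← Real.rpow_add hr0,
        show -(((2:ℕ):ℝ)) * (σ - 1 - (d:ℝ) / 2) + (2 * σ - 2 - (d:ℝ)) = 0 by push_cast; ring,
        Real.rpow_zero]
    have hgt : (c * r ^ (2 * σ - 2 - (d:ℝ))) * H ((r ^ 2)⁻¹ * t)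
        = (c * t ^ (σ - 1 - (d:ℝ) / 2)) * Real.exp (-(4 * ((r ^ 2)⁻¹ * t))⁻¹) := by
      simp only [hHdef]
      rw [Real.mul_rpow hr2.le ht0.le]
      calc c * r ^ (2 * σ - 2 - (d:ℝ)) *
            (((r ^ 2)⁻¹) ^ (σ - 1 - (d:ℝ) / 2) * t ^ (σ - 1 - (d:ℝ) / 2) *
              Real.exp (-(4 * ((r ^ 2)⁻¹ * t))⁻¹))
          = (((r ^ 2)⁻¹) ^ (σ - 1 - (d:ℝ) / 2) * r ^ (2 * σ - 2 - (d:ℝ))) *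
            (c * t ^ (σ - 1 - (d:ℝ) / 2) * Real.exp (-(4 * ((r ^ 2)⁻¹ * t))⁻¹)) := by ring
        _ = (c * t ^ (σ - 1 - (d:ℝ) / 2)) * Real.exp (-(4 * ((r ^ 2)⁻¹ * t))⁻¹) := by
            rw [hcomb, one_mul]
    rw [hgt]
    unfold hermiteHeatKernel
    rw [← hrdef]
    have htσ : (0:ℝ) ≤ t ^ (σ - 1) := Real.rpow_nonneg ht0.le _
    have hsplit : c * t ^ (σ - 1 - (d:ℝ) / 2) = c * t ^ (-(d:ℝ) / 2) * t ^ (σ - 1) := by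
      rw [mul_assoc, ← Real.rpow_add ht0]
      ring_nf
    rw [hsplit]
    have hBexp : (0:ℝ) ≤ Real.exp (-(1 / 4) * (Real.tanh t * ‖x + y‖ ^ 2 +
        (Real.cosh t / Real.sinh t) * r ^ 2)) := (Real.exp_pos _).le
    calc (2 * Real.pi * Real.sinh (2 * t)) ^ (-(d : ℝ) / 2) *
          Real.exp (-(1 / 4) * (Real.tanh t * ‖x + y‖ ^ 2 +
            (Real.cosh t / Real.sinh t) * r ^ 2)) * t ^ (σ - 1)
        ≤ (c * t ^ (-(d : ℝ) / 2)) *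
          Real.exp (-(4 * ((r ^ 2)⁻¹ * t))⁻¹) * t ^ (σ - 1) := by
          apply mul_le_mul_of_nonneg_right _ htσ
          exact mul_le_mul hA hB hBexp (by positivity)
      _ = c * t ^ (-(d:ℝ) / 2) * t ^ (σ - 1) * Real.exp (-(4 * ((r ^ 2)⁻¹ * t))⁻¹) := by ring
  -- the comparison of integrals
  have hmono := integral_mono_of_nonneg hnn hgint hle
  -- value of the majorant integral
  have hval : ∫ t in Set.Ioi (0:ℝ), (c * r ^ (2 * σ - 2 - (d:ℝ))) * H ((r ^ 2)⁻¹ * t)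
      = c * r ^ (2 * σ - (d:ℝ)) * I := by
    rw [MeasureTheory.integral_const_mul, integral_comp_mul_left_Ioi H 0 hr2, mul_zero,
      smul_eq_mul, inv_inv, ← hIdef]
    have hh : r ^ (2 * σ - 2 - (d:ℝ)) * r ^ (2:ℕ) = r ^ (2 * σ - (d:ℝ)) := by
      rw [← Real.rpow_natCast r 2, ← Real.rpow_add hr0]
      congr 1
      push_cast
      ring
    rw [← hh]
    ring
  rw [hval] at hmono
  calc (Real.Gamma σ)⁻¹ * (∫ t in Set.Ioi (0:ℝ), hermiteHeatKernel d t x y * t ^ (σ - 1))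
      ≤ (Real.Gamma σ)⁻¹ * (c * r ^ (2 * σ - (d:ℝ)) * I) := by
        exact mul_le_mul_of_nonneg_left hmono (by positivity)
    _ ≤ ((Real.Gamma σ)⁻¹ * c * I + 1) * r ^ (2 * σ - (d:ℝ)) := by
        nlinarith [hrpos, mul_pos (mul_pos (inv_pos.mpr hΓ) hc0) hrpos]
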